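/- Define T : ℝ³ → ℝ² by T(z, s, v) = (if 0 ≤ s then z else v, s). Then the pushforward of the standard Gaussian measure γ₃ on ℝ³ under T equals the standard Gaussian measure γ₂ on ℝ². In particular, the first coordinate z·1(s ≥ 0) + v·1(s < 0) is standard Gaussian and independent of s. -/

import Mathlib

open MeasureTheory ProbabilityTheory

/-- The standard Gaussian measure on `EuclideanSpace ℝ (Fin d)`. -/
noncomputable def stdGaussian (d : ℕ) : Measure (EuclideanSpace ℝ (Fin d)) :=
  Measure.map (WithLp.toLp 2) (Measure.pi fun _ => gaussianReal 0 1)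

/-- The map `T(z, s, v) = (z·1(s ≥ 0) + v·1(s < 0), s)`. -/
noncomputable def switchMap (x : EuclideanSpace ℝ (Fin 3)) : EuclideanSpace ℝ (Fin 2) :=
  WithLp.toLp 2 ![if 0 ≤ x 1 then x 0 else x 2, x 1]

noncomputable def stdGaussian₀ (d : ℕ) : Measure (Fin d → ℝ) :=
  Measure.pi fun _ => gaussianReal 0 1

noncomputable def switchMap₀ (x : Fin 3 → ℝ) : Fin 2 → ℝ :=
  ![if 0 ≤ x 1 then x 0 else x 2, x 1]

lemma measurable_switchMap₀ : Measurable switchMap₀ := by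
  apply measurable_pi_lambda
  intro i
  fin_cases i
  · simp only [switchMap₀, Matrix.cons_val_zero]
    have h1 : Measurable fun x : (Fin 3 → ℝ) => x 1 := measurable_pi_apply 1
    have h0 : Measurable fun x : (Fin 3 → ℝ) => x 0 := measurable_pi_apply 0
    have h2 : Measurable fun x : (Fin 3 → ℝ) => x 2 := measurable_pi_apply 2
    exact Measurable.ite (measurableSet_le measurable_const h1) h0 h2
  · simpa [switchMap₀] using measurable_pi_apply (1 : Fin 3)

lemma stdGaussian₀3_pi (t : Fin 3 → Set ℝ) :
    (stdGaussian₀ 3) (Set.univ.pi t : Set ((Fin 3 → ℝ)))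
      = (gaussianReal 0 1) (t 0) * (gaussianReal 0 1) (t 1) * (gaussianReal 0 1) (t 2) := by
  show (Measure.pi fun _ : Fin 3 => gaussianReal 0 1) (Set.univ.pi t) = _
  rw [Measure.pi_pi, Fin.prod_univ_three]

lemma map_switchMap₀_stdGaussian₀ :
    Measure.map switchMap₀ (stdGaussian₀ 3) = stdGaussian₀ 2 := by
  show _ = (Measure.pi fun _ : Fin 2 => gaussianReal 0 1)
  refine (Measure.pi_eq (μ := fun _ : Fin 2 => gaussianReal 0 1) fun s hs => ?_).symm
  have hmap : (Measure.map switchMap₀ (stdGaussian₀ 3))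
      ((Set.univ.pi s : Set ((Fin 2 → ℝ))))
      = (stdGaussian₀ 3) (switchMap₀ ⁻¹' (Set.univ.pi s : Set ((Fin 2 → ℝ)))) :=
    Measure.map_apply measurable_switchMap₀ (MeasurableSet.univ_pi hs)
  set A : Set ((Fin 3 → ℝ)) := Set.univ.pi ![s 0, s 1 ∩ Set.Ici 0, Set.univ]
    with hA_def
  set B : Set ((Fin 3 → ℝ)) := Set.univ.pi ![Set.univ, s 1 ∩ Set.Iio 0, s 0]
    with hB_def
  have key : (stdGaussian₀ 3) (switchMap₀ ⁻¹' (Set.univ.pi s : Set ((Fin 2 → ℝ))))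
      = (gaussianReal 0 1) (s 0) * (gaussianReal 0 1) (s 1) := by
    have hpre : switchMap₀ ⁻¹' (Set.univ.pi s : Set ((Fin 2 → ℝ))) = A ∪ B := by
      rw [hA_def, hB_def]
      ext x
      constructor
      · intro hx
        have h0 := hx 0 (Set.mem_univ 0)
        have h1 := hx 1 (Set.mem_univ 1)
        simp only [switchMap₀, Matrix.cons_val_zero, Matrix.cons_val_one, Matrix.head_cons] at h0 h1
        by_cases hs1 : 0 ≤ x 1
        · left
          intro i _
          fin_cases i <;> simp_all
        · right
          intro i _
          fin_cases i <;> simp_all [lt_of_not_ge hs1]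
      · rintro (h | h)
        · have h0 := h 0 (Set.mem_univ 0)
          have h1 := h 1 (Set.mem_univ 1)
          simp only [Matrix.cons_val_zero, Matrix.cons_val_one, Matrix.head_cons] at h0 h1
          intro i _
          have hpos : 0 ≤ x 1 := Set.mem_Ici.mp h1.2
          fin_cases i
          · simp only [switchMap₀, Matrix.cons_val_zero]
            rw [if_pos hpos]; exact h0
          · simpa [switchMap₀] using h1.1
        · have h1 := h 1 (Set.mem_univ 1)
          have h2 := h 2 (Set.mem_univ 2)
          simp only [Matrix.cons_val_one, Matrix.head_cons, Matrix.cons_val_two,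
            Matrix.tail_cons] at h1 h2
          intro i _
          have hneg : ¬ 0 ≤ x 1 := not_le.mpr (Set.mem_Iio.mp h1.2)
          fin_cases i
          · simp only [switchMap₀, Matrix.cons_val_zero]
            rw [if_neg hneg]; exact h2
          · simpa [switchMap₀] using h1.1
    have hdisj : Disjoint A B := by
      rw [hA_def, hB_def, Set.disjoint_left]
      intro x hx hx'
      have h1 := hx 1 (Set.mem_univ 1)
      have h1' := hx' 1 (Set.mem_univ 1)
      simp only [Matrix.cons_val_one, Matrix.head_cons] at h1 h1'
      exact absurd (Set.mem_Iio.mp h1'.2) (not_lt.mpr (Set.mem_Ici.mp h1.2))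
    have hm1 : MeasurableSet B := by
      rw [hB_def]
      apply MeasurableSet.univ_pi
      intro i
      fin_cases i <;>
        simp [MeasurableSet.univ, (hs 1).inter measurableSet_Iio, hs 0]
    have hA : (stdGaussian₀ 3) A
        = (gaussianReal 0 1) (s 0) * (gaussianReal 0 1) (s 1 ∩ Set.Ici 0) := by
      rw [hA_def, stdGaussian₀3_pi]
      simp
    have hB : (stdGaussian₀ 3) B
        = (gaussianReal 0 1) (s 1 ∩ Set.Iio 0) * (gaussianReal 0 1) (s 0) := by
      rw [hB_def, stdGaussian₀3_pi]
      simp [mul_comm]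
    have hsplit : (gaussianReal 0 1) (s 1 ∩ Set.Ici 0) + (gaussianReal 0 1) (s 1 ∩ Set.Iio 0)
        = (gaussianReal 0 1) (s 1) := by
      rw [← measure_union (Set.disjoint_left.mpr fun x hx hx' => absurd (Set.mem_Iio.mp hx'.2) (not_lt.mpr (Set.mem_Ici.mp hx.2)))
        ((hs 1).inter measurableSet_Iio), ← Set.inter_union_distrib_left, Set.union_comm,
        Set.Iio_union_Ici, Set.inter_univ]
    rw [hpre, measure_union hdisj hm1, hA, hB]
    calc (gaussianReal 0 1) (s 0) * (gaussianReal 0 1) (s 1 ∩ Set.Ici 0)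
        + (gaussianReal 0 1) (s 1 ∩ Set.Iio 0) * (gaussianReal 0 1) (s 0)
        = (gaussianReal 0 1) (s 0) * ((gaussianReal 0 1) (s 1 ∩ Set.Ici 0)
          + (gaussianReal 0 1) (s 1 ∩ Set.Iio 0)) := by ring
      _ = (gaussianReal 0 1) (s 0) * (gaussianReal 0 1) (s 1) := by rw [hsplit]
  have hprod : (gaussianReal 0 1) (s 0) * (gaussianReal 0 1) (s 1)
      = ∏ i : Fin 2, ((fun _ => gaussianReal 0 1) i) (s i) := by
    rw [Fin.prod_univ_two]
  exact hmap.trans (key.trans hprod)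

/-- The pushforward of the standard Gaussian `γ₃` under
`T(z, s, v) = (if 0 ≤ s then z else v, s)` is the standard Gaussian `γ₂`; in
particular, the first coordinate is standard Gaussian and independent of `s`. -/
theorem map_switchMap_stdGaussian :
    Measure.map switchMap (stdGaussian 3) = stdGaussian 2 := by
  have hc : switchMap ∘ WithLp.toLp 2 = WithLp.toLp 2 ∘ switchMap₀ := by
    funext x; rfl
  have hsw : Measurable switchMap := by
    have : switchMap = WithLp.toLp 2 ∘ switchMap₀ ∘ WithLp.ofLp := by
      funext x; rfl
    rw [this]
    exact (WithLp.measurable_toLp 2 _).comp (measurable_switchMap₀.comp (WithLp.measurable_ofLp 2 _))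
  unfold _root_.stdGaussian
  rw [Measure.map_map hsw (WithLp.measurable_toLp 2 _), hc,
    ← Measure.map_map (WithLp.measurable_toLp 2 _) measurable_switchMap₀]
  have h := map_switchMap₀_stdGaussian₀
  unfold stdGaussian₀ at h
  rw [h]
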